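/- Let B_1,…,B_m be the wheels of a permutation σ of {1,…,n}, indexed so that max(B_1) < max(B_2) < ⋯ < max(B_m). For a permutation ρ of {1,…,m}, let τ_ρ be the permutation of {1,…,n} whose one-line notation is the concatenation B_{ρ(1)} B_{ρ(2)} ⋯ B_{ρ(m)}. Then the number of wheels of τ_ρ equals the number of left-to-right maxima of the sequence max(B_{ρ(1)}),…,max(B_{ρ(m)}). In particular, τ_ρ has exactly m wheels if and only if ρ is the identity, and otherwise τ_ρ has strictly fewer than m wheels. -/

import Mathlib

namespace Stmt4Aux

def aux : ℕ → List ℕ → ℕ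
  | _, [] => 0
  | M, a :: l => (if M < a then 1 else 0) + aux (max M a) l

def cnt : List ℕ → ℕ
  | [] => 0
  | a :: l => 1 + aux a l

theorem aux_le (M : ℕ) (l : List ℕ) : aux M l ≤ l.length := by
  induction l generalizing M with
  | nil => simp [aux]
  | cons a l ih =>
    simp only [aux, List.length_cons]
    have := ih (max M a)
    split <;> omega

theorem cnt_le (l : List ℕ) : cnt l ≤ l.length := by
  cases l with
  | nil => simp [cnt]
  | cons a l =>
    have := aux_le a l
    simp only [cnt, List.length_cons]
    omega

theorem aux_skip (M : ℕ) (t r : List ℕ) (h : ∀ x ∈ t, x ≤ M) :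
    aux M (t ++ r) = aux M r := by
  induction t with
  | nil => rfl
  | cons a t ih =>
    have ha : a ≤ M := h a (by simp)
    simp only [List.cons_append, aux, if_neg (by omega : ¬ M < a),
      max_eq_left ha, Nat.zero_add]
    exact ih fun x hx => h x (by simp [hx])

theorem aux_flatten (blocks : List (List ℕ)) (hne : ∀ b ∈ blocks, b ≠ [])
    (hmax : ∀ b ∈ blocks, ∀ x ∈ b, x ≤ b.headD 0) (M : ℕ) :
    aux M blocks.flatten = aux M (blocks.map (fun b => b.headD 0)) := by
  induction blocks generalizing M with
  | nil => rfl
  | cons b bs ih =>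
    obtain ⟨h, t, rfl⟩ : ∃ h t, b = h :: t := by
      cases b with
      | nil => exact absurd rfl (hne [] (by simp))
      | cons h t => exact ⟨h, t, rfl⟩
    have hdom : ∀ x ∈ t, x ≤ max M h := by
      intro x hx
      have hx' := hmax (h :: t) List.mem_cons_self x (List.mem_cons_of_mem _ hx)
      simp only [List.headD_cons] at hx'
      exact le_trans hx' (le_max_right _ _)
    simp only [List.flatten_cons, List.map_cons, List.headD_cons, List.cons_append, aux,
      List.append_eq]
    rw [aux_skip (max M h) t _ hdom]
    exact congrArg _ (ih (fun b hb => hne b (List.mem_cons_of_mem _ hb))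
      (fun b hb => hmax b (List.mem_cons_of_mem _ hb)) (max M h))

theorem cnt_flatten (blocks : List (List ℕ)) (hne : ∀ b ∈ blocks, b ≠ [])
    (hmax : ∀ b ∈ blocks, ∀ x ∈ b, x ≤ b.headD 0) :
    cnt blocks.flatten = cnt (blocks.map (fun b => b.headD 0)) := by
  cases blocks with
  | nil => rfl
  | cons b bs =>
    obtain ⟨h, t, rfl⟩ : ∃ h t, b = h :: t := by
      cases b with
      | nil => exact absurd rfl (hne [] (by simp))
      | cons h t => exact ⟨h, t, rfl⟩
    have hdom : ∀ x ∈ t, x ≤ h := by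
      intro x hx
      have hx' := hmax (h :: t) List.mem_cons_self x (List.mem_cons_of_mem _ hx)
      simpa using hx'
    simp only [List.flatten_cons, List.map_cons, List.headD_cons, List.cons_append, cnt,
      List.append_eq]
    rw [aux_skip h t _ hdom]
    exact congrArg _ (aux_flatten bs (fun b hb => hne b (List.mem_cons_of_mem _ hb))
      (fun b hb => hmax b (List.mem_cons_of_mem _ hb)) h)

theorem aux_chain (M : ℕ) (l : List ℕ) (h : List.Chain' (· < ·) (M :: l)) :
    aux M l = l.length := by
  induction l generalizing M with
  | nil => rfl
  | cons a l ih =>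
    rw [List.Chain', List.isChain_cons_cons] at h
    simp only [aux, if_pos h.1, max_eq_right h.1.le, List.length_cons]
    rw [ih a h.2]; omega

theorem chain_of_aux (M : ℕ) (l : List ℕ) (h : aux M l = l.length) :
    List.Chain' (· < ·) (M :: l) := by
  induction l generalizing M with
  | nil => simp [List.Chain']
  | cons a l ih =>
    simp only [aux, List.length_cons] at h
    have hle := aux_le (max M a) l
    have hMa : M < a := by by_contra hc; rw [if_neg hc] at h; omega
    rw [if_pos hMa, max_eq_right hMa.le] at h
    rw [List.Chain', List.isChain_cons_cons]
    exact ⟨hMa, ih a (by omega)⟩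

theorem cnt_eq_length_iff (l : List ℕ) :
    cnt l = l.length ↔ List.Chain' (· < ·) l := by
  cases l with
  | nil => simp [cnt, List.Chain']
  | cons a l =>
    simp only [cnt, List.length_cons]
    constructor
    · intro h
      rw [List.Chain', List.isChain_cons]
      exact ⟨fun y hy => by
        have := chain_of_aux a l (by omega)
        rw [List.Chain', List.isChain_cons] at this; exact this.1 y hy,
        (chain_of_aux a l (by omega)).tail⟩
    · intro h
      rw [aux_chain a l ?_]
      · omega
      · rw [List.Chain', List.isChain_cons]
        rw [List.Chain', List.isChain_cons] at h
        exact h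

theorem card_filter_range (p : ℕ → Prop) [DecidablePred p] (n : ℕ) :
    ((Finset.range n).filter p).card = (List.range n).countP (fun i => decide (p i)) := by
  induction n with
  | zero => simp
  | succ n ih =>
    rw [Finset.range_add_one, List.range_succ, List.countP_append, Finset.filter_insert]
    by_cases h : p n
    · rw [if_pos h, Finset.card_insert_of_notMem (by simp), ih]
      simp [h]
    · rw [if_neg h, ih]; simp [h]

theorem countP_aux (M : ℕ) (l : List ℕ) :
    (List.range l.length).countP
      (fun i => decide (M < l.getD i 0 ∧ ∀ j, j < i → l.getD j 0 < l.getD i 0)) = aux M l := by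
  induction l generalizing M with
  | nil => rfl
  | cons a l ih =>
    rw [List.length_cons, List.range_succ_eq_map, List.countP_cons, List.countP_map]
    have hcong : List.countP ((fun i => decide (M < (a::l).getD i 0 ∧
          ∀ j, j < i → (a::l).getD j 0 < (a::l).getD i 0)) ∘ Nat.succ) (List.range l.length)
        = List.countP (fun i => decide (max M a < l.getD i 0 ∧
          ∀ j, j < i → l.getD j 0 < l.getD i 0)) (List.range l.length) := by
      apply List.countP_congr
      intro i _
      simp only [Function.comp_apply, decide_eq_true_eq, List.getD_cons_succ]
      constructor
      · rintro ⟨h1, h2⟩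
        refine ⟨max_lt h1 (by simpa using h2 0 (Nat.succ_pos _)), fun j hj => ?_⟩
        simpa using h2 (j+1) (by omega)
      · rintro ⟨h1, h2⟩
        refine ⟨lt_of_le_of_lt (le_max_left _ _) h1, fun j hj => ?_⟩
        cases j with
        | zero => simpa using lt_of_le_of_lt (le_max_right _ _) h1
        | succ j => simpa using h2 j (by omega)
    rw [hcong, ih (max M a)]
    simp only [aux, List.getD_cons_zero]
    by_cases h : M < a <;> simp [h] <;> omega

theorem countP_cnt (l : List ℕ) :
    (List.range l.length).countP
      (fun i => decide (∀ j, j < i → l.getD j 0 < l.getD i 0)) = cnt l := by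
  cases l with
  | nil => rfl
  | cons a l =>
    rw [List.length_cons, List.range_succ_eq_map, List.countP_cons, List.countP_map]
    have hcong : List.countP ((fun i => decide (∀ j, j < i →
          (a::l).getD j 0 < (a::l).getD i 0)) ∘ Nat.succ) (List.range l.length)
        = List.countP (fun i => decide (a < l.getD i 0 ∧
          ∀ j, j < i → l.getD j 0 < l.getD i 0)) (List.range l.length) := by
      apply List.countP_congr
      intro i _
      simp only [Function.comp_apply, decide_eq_true_eq, List.getD_cons_succ]
      constructor
      · rintro h2
        refine ⟨by simpa using h2 0 (Nat.succ_pos _), fun j hj => ?_⟩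
        simpa using h2 (j+1) (by omega)
      · rintro ⟨h1, h2⟩ j hj
        cases j with
        | zero => simpa using h1
        | succ j => simpa using h2 j (by omega)
    rw [hcong, countP_aux a l]
    simp only [cnt]
    simp
    omega

end Stmt4Aux

/-- Let B_1,…,B_m be the wheels of a permutation σ of {1,…,n} (blocks of the
one-line notation, each beginning with its own maximum element, and indexed so that
max(B_1) < ⋯ < max(B_m)).  For an ordering ρ of {1,…,m}, let τ_ρ be the permutation whose
one-line notation is the concatenation B_{ρ(1)} ⋯ B_{ρ(m)}.  Then the number of wheels of
τ_ρ (= number of left-to-right maxima of its one-line notation) equals the number of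
left-to-right maxima of the sequence max(B_{ρ(1)}),…,max(B_{ρ(m)}); τ_ρ has exactly m
wheels iff ρ is the identity, and otherwise strictly fewer than m. -/
theorem stmt4 (n m : ℕ) (σ : Equiv.Perm (Fin n))
    (Ws : Fin m → List ℕ)
    (hjoin : (List.ofFn Ws).flatten = List.ofFn (fun i => ((σ i : Fin n) : ℕ)))
    (hne : ∀ k, Ws k ≠ [])
    (hheadmax : ∀ k, ∀ x ∈ Ws k, x ≤ (Ws k).headD 0)
    (hmono : ∀ k k' : Fin m, k < k' → (Ws k).headD 0 < (Ws k').headD 0)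
    (lrCount : List ℕ → ℕ)
    (hlr : ∀ l : List ℕ, lrCount l =
      ((Finset.range l.length).filter
        (fun i => ∀ j, j < i → l.getD j 0 < l.getD i 0)).card) :
    ∀ ρ : Equiv.Perm (Fin m),
      lrCount ((List.ofFn (fun k => Ws (ρ k))).flatten) =
          lrCount (List.ofFn (fun k => (Ws (ρ k)).headD 0)) ∧
      (lrCount ((List.ofFn (fun k => Ws (ρ k))).flatten) = m ↔ ρ = 1) ∧
      (ρ ≠ 1 → lrCount ((List.ofFn (fun k => Ws (ρ k))).flatten) < m) := by
  intro ρ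
  have lr_eq : ∀ l : List ℕ, lrCount l = Stmt4Aux.cnt l := by
    intro l
    rw [hlr l, Stmt4Aux.card_filter_range, Stmt4Aux.countP_cnt]
  set blocks : List (List ℕ) := List.ofFn (fun k => Ws (ρ k)) with hblocks
  set H : List ℕ := List.ofFn (fun k => (Ws (ρ k)).headD 0) with hH
  have hbne : ∀ b ∈ blocks, b ≠ [] := by
    rw [hblocks]
    intro b hb
    rw [List.mem_ofFn] at hb
    obtain ⟨k, rfl⟩ := hb
    exact hne (ρ k)
  have hbmax : ∀ b ∈ blocks, ∀ x ∈ b, x ≤ b.headD 0 := by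
    rw [hblocks]
    intro b hb
    rw [List.mem_ofFn] at hb
    obtain ⟨k, rfl⟩ := hb
    exact hheadmax (ρ k)
  have hmap : blocks.map (fun b => b.headD 0) = H := by
    rw [hblocks, hH, List.map_ofFn]
    rfl
  have hHlen : H.length = m := by rw [hH, List.length_ofFn]
  have eq1 : lrCount blocks.flatten = lrCount H := by
    rw [lr_eq, lr_eq, Stmt4Aux.cnt_flatten blocks hbne hbmax, hmap]
  have hiff : Stmt4Aux.cnt H = m ↔ ρ = 1 := by
    constructor
    · intro hcnt
      have hchain : List.Chain' (· < ·) H :=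
        (Stmt4Aux.cnt_eq_length_iff H).mp (by rw [hcnt, hHlen])
      have hpw : ∀ ⦃i j : Fin m⦄, i < j →
          (Ws (ρ i)).headD 0 < (Ws (ρ j)).headD 0 := by
        rw [hH] at hchain
        exact List.pairwise_ofFn.mp (List.isChain_iff_pairwise.mp hchain)
      have hsm : StrictMono (ρ : Fin m → Fin m) := by
        intro i j hij
        rcases lt_trichotomy (ρ i) (ρ j) with h | h | h
        · exact h
        · exact absurd (hpw hij) (by rw [h]; exact lt_irrefl _)
        · exact absurd (hpw hij) (not_lt_of_gt (hmono _ _ h))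
      have hrange : Set.range (ρ : Fin m → Fin m) = Set.range (id : Fin m → Fin m) := by
        rw [Set.range_id, Set.range_eq_univ]
        exact ρ.surjective
      have inst : WellFoundedLT (Fin m) := inferInstance
      have hfn : (ρ : Fin m → Fin m) = id :=
        (StrictMono.range_inj hsm strictMono_id).mp hrange
      exact Equiv.ext fun x => congrFun hfn x
    · rintro rfl
      have hchain : List.Chain' (· < ·) H := by
        rw [hH]
        refine List.isChain_iff_pairwise.mpr (List.pairwise_ofFn.mpr ?_)
        intro i j hij
        simpa using hmono i j hij
      rw [← hHlen]
      exact (Stmt4Aux.cnt_eq_length_iff H).mpr hchain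
  refine ⟨eq1, by rw [eq1, lr_eq]; exact hiff, ?_⟩
  intro hρ
  rw [eq1, lr_eq]
  have hle := Stmt4Aux.cnt_le H
  rw [hHlen] at hle
  exact lt_of_le_of_ne hle (fun h => hρ (hiff.mp h))
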